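/- arXiv:1508.04093 — 2 statements merged into one kernel-verified Lean document; each statement's English description precedes it below -/
import Mathlib

section
/- Let φ : ℝⁿ → [0, ∞] be positively homogeneous of degree 1 and suppose f = e^{-φ} is a probability density function on ℝⁿ. If X has density f, then the varentropy of X satisfies V(X) = Var(log f(X)) = n. In particular, the bound V(X) ≤ n for log-concave densities is sharp. -/
open MeasureTheory
open scoped ENNReal
open Real Set

lemma lint_scale {n : ℕ} (g : (Fin n → ℝ) → ℝ≥0∞) (hg : Measurable g) {t : ℝ} (ht : 0 < t) :
    ∫⁻ x, g (t • x) = ENNReal.ofReal ((t ^ n)⁻¹) * ∫⁻ x, g x := by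
  rw [← lintegral_map hg (measurable_const_smul t),
    Measure.map_addHaar_smul volume (ne_of_gt ht), lintegral_smul_measure]
  congr 2
  rw [Module.finrank_fin_fun, abs_of_nonneg (by positivity)]

lemma inner_t_integral {c : ℝ} (hc : 0 < c) (k : ℕ) :
    ∫⁻ t in Ioi (1:ℝ), ENNReal.ofReal (Real.exp (-(t * c)) * c ^ (k+1))
      = ENNReal.ofReal (Real.exp (-c) * c ^ k) := by
  have hint : IntegrableOn (fun t : ℝ => Real.exp (-(t * c)) * c ^ (k+1)) (Ioi 1) := by
    have := (exp_neg_integrableOn_Ioi 1 hc)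
    simpa [mul_comm, IntegrableOn] using this.mul_const (c ^ (k+1))
  rw [← ofReal_integral_eq_lintegral_ofReal hint]
  · congr 1
    rw [MeasureTheory.integral_mul_const]
    have : ∫ t in Ioi (1:ℝ), Real.exp (-(t * c)) = c⁻¹ * Real.exp (-c) := by
      have h := integral_comp_mul_left_Ioi (fun u => Real.exp (-u)) 1 hc
      simp only [smul_eq_mul, mul_one] at h
      rw [show (fun t : ℝ => Real.exp (-(t * c))) = fun t : ℝ => Real.exp (-(c * t)) by
        funext t; rw [mul_comm]]
      rw [h, integral_exp_neg_Ioi]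
    rw [this]
    field_simp
    ring
  · filter_upwards with t
    positivity

lemma t_power_integral (m : ℕ) :
    ∫⁻ t in Ioi (1:ℝ), ENNReal.ofReal ((t ^ (m+2))⁻¹) = ENNReal.ofReal (((m:ℝ)+1)⁻¹) := by
  have hm : (0:ℝ) ≤ m := Nat.cast_nonneg m
  have ha : (-((m:ℝ)+2)) < -1 := by linarith
  have hcong : ∫⁻ t in Ioi (1:ℝ), ENNReal.ofReal ((t ^ (m+2))⁻¹)
      = ∫⁻ t in Ioi (1:ℝ), ENNReal.ofReal (t ^ (-((m:ℝ)+2))) := by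
    apply setLIntegral_congr_fun measurableSet_Ioi
    intro t ht
    beta_reduce
    have ht0 : (0:ℝ) < t := lt_trans one_pos ht
    congr 1
    rw [rpow_neg ht0.le]
    congr 1
    rw [show ((m:ℝ)+2) = ((m+2 : ℕ) : ℝ) by push_cast; ring, rpow_natCast]
  rw [hcong, ← ofReal_integral_eq_lintegral_ofReal
      (integrableOn_Ioi_rpow_of_lt ha one_pos)
      (by filter_upwards [ae_restrict_mem measurableSet_Ioi] with t ht;
          exact rpow_nonneg (le_of_lt (lt_trans one_pos ht)) _)]
  rw [integral_Ioi_rpow_of_lt ha one_pos]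
  congr 1
  rw [one_rpow]
  have hne : (-((m:ℝ)+2) + 1) ≠ 0 := by intro h; linarith
  have hm1 : ((m:ℝ)+1) ≠ 0 := by linarith
  rw [div_eq_iff hne]
  field_simp
  ring

lemma moment_rec {n : ℕ} (hn : 0 < n)
    (φ : (Fin n → ℝ) → ℝ≥0∞) (hφ_meas : Measurable φ)
    (hφ_hom : ∀ t : ℝ, 0 < t → ∀ x : Fin n → ℝ, φ (t • x) = ENNReal.ofReal t * φ x)
    (f : (Fin n → ℝ) → ℝ)
    (hf : ∀ x, f x = if φ x = ∞ then 0 else Real.exp (-(φ x).toReal))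
    (hzero : volume {x : Fin n → ℝ | φ x = 0} = 0) (k : ℕ) :
    ∫⁻ x, ENNReal.ofReal (f x * ((φ x).toReal) ^ k)
      = ENNReal.ofReal (((n:ℝ)+k))⁻¹ * ∫⁻ x, ENNReal.ofReal (f x * ((φ x).toReal) ^ (k+1)) := by
  set H : ℝ → (Fin n → ℝ) → ℝ≥0∞ := fun t x =>
    ENNReal.ofReal ((if φ x = ∞ then 0 else Real.exp (-(t * (φ x).toReal)))
      * ((φ x).toReal) ^ (k+1)) with hH
  have hae : ∀ᵐ x : Fin n → ℝ, φ x ≠ 0 := by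
    rw [ae_iff]; simpa [not_not] using hzero
  -- Step 1: rewrite LHS as double integral
  have step1 : ∫⁻ x, ENNReal.ofReal (f x * ((φ x).toReal) ^ k)
      = ∫⁻ x, ∫⁻ t in Ioi (1:ℝ), H t x := by
    refine lintegral_congr_ae ?_
    filter_upwards [hae] with x hx
    by_cases hxt : φ x = ∞
    · simp [hH, hxt, hf x]
    · have hc : 0 < (φ x).toReal := ENNReal.toReal_pos hx hxt
      have : (fun t : ℝ => H t x)
          = fun t : ℝ => ENNReal.ofReal (Real.exp (-(t * (φ x).toReal)) * ((φ x).toReal) ^ (k+1)) := by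
        funext t; simp [hH, hxt]
      rw [this, inner_t_integral hc k, hf x, if_neg hxt]
  -- measurability of H uncurried
  have hHm : Measurable (Function.uncurry fun x (t : ℝ) => H t x) := by
    apply ENNReal.measurable_ofReal.comp
    apply Measurable.mul
    · apply Measurable.ite
      · exact (hφ_meas.comp measurable_fst) (measurableSet_singleton ∞)
      · exact measurable_const
      · exact (measurable_snd.mul
          ((ENNReal.measurable_toReal.comp hφ_meas).comp measurable_fst)).neg.exp
    · exact ((ENNReal.measurable_toReal.comp hφ_meas).comp measurable_fst).pow measurable_const
  -- Step 2: swap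
  have step2 : ∫⁻ x, ∫⁻ t in Ioi (1:ℝ), H t x
      = ∫⁻ t in Ioi (1:ℝ), ∫⁻ x, H t x := by
    exact lintegral_lintegral_swap hHm.aemeasurable
  -- Step 3: inner x-integral for fixed t > 1
  have hGm : Measurable fun x => ENNReal.ofReal (f x * ((φ x).toReal) ^ (k+1)) := by
    have hfm : Measurable f := by
      rw [funext hf]
      exact Measurable.ite (hφ_meas (measurableSet_singleton ∞)) measurable_const
        ((ENNReal.measurable_toReal.comp hφ_meas).neg.exp)
    exact ENNReal.measurable_ofReal.comp
      (hfm.mul ((ENNReal.measurable_toReal.comp hφ_meas).pow measurable_const))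
  have step3 : ∀ t : ℝ, t ∈ Ioi (1:ℝ) → ∫⁻ x, H t x
      = ENNReal.ofReal ((t ^ (n+k+1))⁻¹) * ∫⁻ x, ENNReal.ofReal (f x * ((φ x).toReal) ^ (k+1)) := by
    intro t ht
    have ht0 : (0:ℝ) < t := lt_trans one_pos ht
    have key : ∀ x, ENNReal.ofReal (f (t • x) * ((φ (t • x)).toReal) ^ (k+1))
        = ENNReal.ofReal (t ^ (k+1)) * H t x := by
      intro x
      by_cases hx : φ x = ∞
      · have hxt : φ (t • x) = ∞ := by
          rw [hφ_hom t ht0 x, hx, ENNReal.mul_top]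
          simpa using ht0
        simp [hH, hf, hx, hxt]
      · have hφt : φ (t • x) = ENNReal.ofReal t * φ x := hφ_hom t ht0 x
        have h1 : φ (t • x) ≠ ∞ := by
          rw [hφt]; exact ENNReal.mul_ne_top ENNReal.ofReal_ne_top hx
        have h2 : (φ (t • x)).toReal = t * (φ x).toReal := by
          rw [hφt, ENNReal.toReal_mul, ENNReal.toReal_ofReal ht0.le]
        rw [hf (t • x), if_neg h1, h2]
        simp only [hH, if_neg hx]
        rw [← ENNReal.ofReal_mul (by positivity)]
        congr 1
        rw [mul_pow]
        ring
    have hscale := lint_scale _ hGm ht0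
    rw [show (fun x => ENNReal.ofReal (f (t • x) * ((φ (t • x)).toReal) ^ (k+1)))
        = fun x => ENNReal.ofReal (t ^ (k+1)) * H t x from funext key] at hscale
    rw [lintegral_const_mul' _ _ ENNReal.ofReal_ne_top] at hscale
    have htk : ENNReal.ofReal (t ^ (k+1)) ≠ 0 :=
      (ENNReal.ofReal_pos.mpr (by positivity)).ne'
    have := congrArg (fun z => (ENNReal.ofReal (t ^ (k+1)))⁻¹ * z) hscale
    rw [← mul_assoc, ENNReal.inv_mul_cancel htk ENNReal.ofReal_ne_top, one_mul] at this
    rw [this, ← mul_assoc]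
    congr 1
    rw [← ENNReal.ofReal_inv_of_pos (by positivity : (0:ℝ) < t ^ (k+1)),
      ← ENNReal.ofReal_mul (by positivity)]
    congr 1
    rw [← mul_inv, ← pow_add]
    congr 2
    omega
  -- Step 4: combine
  rw [step1, step2, setLIntegral_congr_fun measurableSet_Ioi
    (fun t ht => step3 t ht)]
  rw [lintegral_mul_const _ (by measurability)]
  congr 1
  have := t_power_integral (n + k - 1)
  rw [show n + k - 1 + 2 = n + k + 1 by omega] at this
  rw [this]
  congr 1
  have : ((n + k - 1 : ℕ) : ℝ) = (n:ℝ) + k - 1 := by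
    have : 1 ≤ n + k := by omega
    push_cast [Nat.cast_sub this]
    ring
  rw [this]
  ring_nf


/-- The varentropy `V(X) = Var(log f(X)) = ∫ f (log f)² - (∫ f log f)²` of a random
vector `X` on `ℝⁿ` with density `f`. -/
noncomputable def varentropy {n : ℕ} (f : (Fin n → ℝ) → ℝ) : ℝ :=
  (∫ x, f x * (Real.log (f x)) ^ 2) - (∫ x, f x * Real.log (f x)) ^ 2

/-- If `φ : ℝⁿ → [0, ∞]` is positively homogeneous of degree 1 and `f = e^{-φ}` is a
probability density on `ℝⁿ`, then a random vector `X` with density `f` satisfies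
`V(X) = Var(log f(X)) = n`; in particular the bound `V(X) ≤ n` for log-concave
densities is sharp. -/
theorem varentropy_eq_dim_of_homogeneous_potential {n : ℕ}
    (φ : (Fin n → ℝ) → ℝ≥0∞) (hφ_meas : Measurable φ)
    (hφ_hom : ∀ t : ℝ, 0 < t → ∀ x : Fin n → ℝ, φ (t • x) = ENNReal.ofReal t * φ x)
    (f : (Fin n → ℝ) → ℝ)
    (hf : ∀ x, f x = if φ x = ∞ then 0 else Real.exp (-(φ x).toReal))
    (hf_prob : ∫ x, f x = 1) :
    varentropy f = n := by
  have hf_nonneg : ∀ x, 0 ≤ f x := by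
    intro x; rw [hf]; split
    · exact le_refl 0
    · positivity
  have hfm : Measurable f := by
    rw [funext hf]
    exact Measurable.ite (hφ_meas (measurableSet_singleton ∞)) measurable_const
      ((ENNReal.measurable_toReal.comp hφ_meas).neg.exp)
  have hf_int : Integrable f := by
    by_contra h
    rw [integral_undef h] at hf_prob
    norm_num at hf_prob
  rcases Nat.eq_zero_or_pos n with hn | hn
  -- case n = 0
  · subst hn
    have hzero : ∀ x : Fin 0 → ℝ, φ x = 0 := by
      intro x
      have h2 := hφ_hom 2 (by norm_num) x
      rw [Subsingleton.elim ((2:ℝ) • x) x] at h2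
      by_cases hx : φ x = ∞
      · exfalso
        have hfx : ∀ y : Fin 0 → ℝ, f y = 0 := by
          intro y; rw [Subsingleton.elim y x, hf, if_pos hx]
        rw [funext hfx] at hf_prob
        simp at hf_prob
      · -- φ x = ofReal 2 * φ x, finite, so φ x = 0
        have hb := congrArg ENNReal.toReal h2
        rw [ENNReal.toReal_mul, ENNReal.toReal_ofReal (by norm_num)] at hb
        have : (φ x).toReal = 0 := by linarith
        exact (ENNReal.toReal_eq_zero_iff _).mp this |>.resolve_right hx
    have hf1 : ∀ x, f x = 1 := by
      intro x; rw [hf, if_neg (by rw [hzero x]; exact ENNReal.zero_ne_top), hzero x]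
      simp
    unfold varentropy
    have : ∀ x : Fin 0 → ℝ, f x * Real.log (f x) ^ 2 = 0 := by
      intro x; rw [hf1 x]; simp
    rw [funext this]
    have : ∀ x : Fin 0 → ℝ, f x * Real.log (f x) = 0 := by
      intro x; rw [hf1 x]; simp
    rw [funext this]
    simp
  -- case n ≥ 1
  · set L : ℕ → ℝ≥0∞ := fun k => ∫⁻ x, ENNReal.ofReal (f x * ((φ x).toReal) ^ k) with hL
    have hL0 : L 0 = 1 := by
      simp only [hL, pow_zero, mul_one]
      rw [← ofReal_integral_eq_lintegral_ofReal hf_int (ae_of_all _ hf_nonneg), hf_prob,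
        ENNReal.ofReal_one]
    -- {φ = 0} is a null set
    have hS : MeasurableSet {x : Fin n → ℝ | φ x = 0} := hφ_meas (measurableSet_singleton 0)
    have hzero : volume {x : Fin n → ℝ | φ x = 0} = 0 := by
      set S := {x : Fin n → ℝ | φ x = 0} with hSdef
      have hSle : volume S ≤ 1 := by
        calc volume S = ∫⁻ x, S.indicator (1 : (Fin n → ℝ) → ℝ≥0∞) x := by
              rw [lintegral_indicator_one hS]
          _ ≤ ∫⁻ x, ENNReal.ofReal (f x) := by
              apply lintegral_mono
              intro x
              by_cases hx : x ∈ S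
              · have : f x = 1 := by
                  rw [hf, if_neg (by rw [hx]; exact ENNReal.zero_ne_top), hx]; simp
                simp [Set.indicator_of_mem hx, this]
              · simp [Set.indicator_of_notMem hx]
          _ = 1 := by
              rw [← ofReal_integral_eq_lintegral_ofReal hf_int (ae_of_all _ hf_nonneg), hf_prob,
                ENNReal.ofReal_one]
      have hscale := lint_scale (S.indicator (1 : (Fin n → ℝ) → ℝ≥0∞))
        ((measurable_one.indicator hS)) (two_pos)
      have hpre : ∀ x : Fin n → ℝ, S.indicator (1 : (Fin n → ℝ) → ℝ≥0∞) ((2:ℝ) • x)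
          = S.indicator (1 : (Fin n → ℝ) → ℝ≥0∞) x := by
        intro x
        have : ((2:ℝ) • x ∈ S) ↔ (x ∈ S) := by
          simp only [hSdef, Set.mem_setOf_eq, hφ_hom 2 two_pos x, mul_eq_zero]
          constructor
          · rintro (h | h)
            · exact absurd h (by simp)
            · exact h
          · exact fun h => Or.inr h
        by_cases hx : x ∈ S
        · rw [Set.indicator_of_mem hx, Set.indicator_of_mem (this.mpr hx)]
          rfl
        · rw [Set.indicator_of_notMem hx, Set.indicator_of_notMem (fun h => hx (this.mp h))]
      rw [funext hpre, lintegral_indicator_one hS] at hscale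
      by_contra h
      have hne : volume S ≠ ∞ := (lt_of_le_of_lt hSle ENNReal.one_lt_top).ne
      have hlt : ENNReal.ofReal (((2:ℝ) ^ n)⁻¹) < 1 := by
        rw [← ENNReal.ofReal_one]
        apply ENNReal.ofReal_lt_ofReal_iff_of_nonneg (by positivity) |>.mpr
        rw [inv_lt_one_iff₀]
        right
        exact one_lt_pow₀ (by norm_num) (by omega)
      have : volume S < volume S := by
        conv_lhs => rw [hscale]
        calc ENNReal.ofReal (((2:ℝ) ^ n)⁻¹) * volume S < 1 * volume S := by
              exact (ENNReal.mul_lt_mul_iff_left h hne).mpr hlt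
          _ = volume S := one_mul _
      exact absurd this (lt_irrefl _)
    -- moments
    have h0 : L 0 = ENNReal.ofReal ((n:ℝ) + ((0:ℕ):ℝ))⁻¹ * L (0+1) :=
      moment_rec hn φ hφ_meas hφ_hom f hf hzero 0
    have h1 : L 1 = ENNReal.ofReal ((n:ℝ) + ((1:ℕ):ℝ))⁻¹ * L (1+1) :=
      moment_rec hn φ hφ_meas hφ_hom f hf hzero 1
    norm_num at h0 h1
    have hnpos : (0:ℝ) < n := by exact_mod_cast hn
    have cancel : ∀ c : ℝ, 0 < c → ENNReal.ofReal c * ENNReal.ofReal c⁻¹ = 1 := by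
      intro c hc
      rw [← ENNReal.ofReal_mul hc.le, mul_inv_cancel₀ hc.ne', ENNReal.ofReal_one]
    have hL1 : L 1 = ENNReal.ofReal (n:ℝ) := by
      have := congrArg (fun z => ENNReal.ofReal (n:ℝ) * z) h0
      rw [hL0, mul_one, ← mul_assoc, cancel _ hnpos, one_mul] at this
      exact this.symm
    have hL2 : L 2 = ENNReal.ofReal ((n:ℝ) * ((n:ℝ)+1)) := by
      have := congrArg (fun z => ENNReal.ofReal ((n:ℝ)+1) * z) h1
      rw [hL1, ← mul_assoc, cancel _ (by linarith), one_mul] at this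
      rw [← this, ← ENNReal.ofReal_mul (by linarith)]
      congr 1
      ring
    -- Bochner integrals
    have hint_eq : ∀ k : ℕ, ∫ x, f x * ((φ x).toReal) ^ k = (L k).toReal := by
      intro k
      have hmk : AEStronglyMeasurable (fun x => f x * ((φ x).toReal) ^ k) volume :=
        (hfm.mul (hφ_meas.ennreal_toReal.pow_const k)).aestronglyMeasurable
      rw [integral_eq_lintegral_of_nonneg_ae
        (ae_of_all _ fun x => mul_nonneg (hf_nonneg x) (pow_nonneg ENNReal.toReal_nonneg k))
        hmk]
    have hI1 : ∫ x, f x * (φ x).toReal = (n:ℝ) := by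
      have := hint_eq 1
      simp only [pow_one] at this
      rw [this, hL1, ENNReal.toReal_ofReal (Nat.cast_nonneg n)]
    have hI2 : ∫ x, f x * ((φ x).toReal) ^ 2 = (n:ℝ) * ((n:ℝ)+1) := by
      rw [hint_eq 2, hL2, ENNReal.toReal_ofReal (by positivity)]
    -- final computation
    unfold varentropy
    have e2 : ∀ x, f x * Real.log (f x) ^ 2 = f x * ((φ x).toReal) ^ 2 := by
      intro x
      by_cases hx : φ x = ∞
      · rw [hf, if_pos hx]; ring
      · rw [hf, if_neg hx, Real.log_exp]; ring
    have e1 : ∀ x, f x * Real.log (f x) = -(f x * (φ x).toReal) := by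
      intro x
      by_cases hx : φ x = ∞
      · rw [hf, if_pos hx]; ring
      · rw [hf, if_neg hx, Real.log_exp]; ring
    rw [funext e2, funext e1, integral_neg, hI1, hI2]
    ring
end

section
/- Let X be a random vector in ℝⁿ with density f such that f ∈ L^α(ℝⁿ) for each α > 0. For α > 0 let X_α have density f_α = f^α / ∫ f^α, and set K = sup_{α>0} V(X_α), where V denotes varentropy. Then for every β ∈ ℝ, E[e^{β(h̃(X) - h(X))}] ≤ e^{K r(-β)}, where r(u) = u - log(1+u) for u > -1 and r(u) = +∞ for u ≤ -1. -/
open MeasureTheory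
open scoped ENNReal

/-- The entropy `h(X) = -∫ f log f` of a random vector `X` on `ℝⁿ` with density `f`. -/
noncomputable def entropy {n : ℕ} (f : (Fin n → ℝ) → ℝ) : ℝ :=
  -∫ x, f x * Real.log (f x)

/-- The tilted density `f_α = f^α / ∫ f^α`. -/
noncomputable def tilt {n : ℕ} (f : (Fin n → ℝ) → ℝ) (α : ℝ) : (Fin n → ℝ) → ℝ :=
  fun x => f x ^ α / ∫ y, f y ^ α

/-- The rate function `r(u) = u - log(1+u)` for `u > -1`, and `r(u) = +∞` for `u ≤ -1`. -/
noncomputable def rate (u : ℝ) : EReal :=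
  if -1 < u then ((u - Real.log (1 + u) : ℝ) : EReal) else ⊤

namespace MgfAux

/-- On `(0,1]`, `|log x| ≤ x^(-ε)/ε`. -/
lemma abs_log_le_small {x ε : ℝ} (hx : 0 < x) (hx1 : x ≤ 1) (hε : 0 < ε) :
    |Real.log x| ≤ x ^ (-ε) / ε := by
  have h1 : |Real.log x| = Real.log x⁻¹ := by
    rw [Real.log_inv, abs_of_nonpos (Real.log_nonpos hx.le hx1)]
  rw [h1]
  calc Real.log x⁻¹ ≤ (x⁻¹) ^ ε / ε := Real.log_le_rpow_div (inv_nonneg.2 hx.le) hε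
    _ = x ^ (-ε) / ε := by rw [Real.inv_rpow hx.le, ← Real.rpow_neg hx.le]

/-- On `[1,∞)`, `|log x| ≤ x^ε/ε`. -/
lemma abs_log_le_large {x ε : ℝ} (hx : 1 ≤ x) (hε : 0 < ε) :
    |Real.log x| ≤ x ^ ε / ε := by
  rw [abs_of_nonneg (Real.log_nonneg hx)]
  exact Real.log_le_rpow_div (le_trans zero_le_one hx) hε

end MgfAux

namespace MgfAux2
open MgfAux

lemma dominating (m : ℕ) {a b : ℝ} (ha : 0 < a) (hab : a ≤ b) :
    ∃ C : ℝ, 0 ≤ C ∧ ∀ t ∈ Set.Icc a b, ∀ x : ℝ, 0 ≤ x →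
      x ^ t * |Real.log x| ^ m ≤ C * (x ^ (a/2) + x ^ (2*b)) := by
  have hb : 0 < b := lt_of_lt_of_le ha hab
  refine ⟨(2*m/a)^m + (m/b)^m, by positivity, ?_⟩
  rintro t ⟨hta, htb⟩ x hx
  have hC1 : (0:ℝ) ≤ (2*m/a)^m := by positivity
  have hC2 : (0:ℝ) ≤ (m/b)^m := by positivity
  rcases eq_or_lt_of_le hx with h0 | hx0
  · -- x = 0
    have ht0 : t ≠ 0 := (lt_of_lt_of_le ha hta).ne'
    rw [← h0, Real.zero_rpow ht0, zero_mul,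
      Real.zero_rpow (by positivity : a/2 ≠ 0), Real.zero_rpow (by positivity : 2*b ≠ 0)]
    simp
  rcases le_or_gt x 1 with hx1 | hx1
  · -- 0 < x ≤ 1
    have key : |Real.log x| ^ m ≤ (2*m/a)^m * x ^ (-(a/2)) := by
      rcases Nat.eq_zero_or_pos m with hm | hm
      · subst hm
        simpa using Real.one_le_rpow_of_pos_of_le_one_of_nonpos hx0 hx1 (by linarith)
      · have hm' : (0:ℝ) < m := by exact_mod_cast hm
        set ε : ℝ := a/(2*m) with hεdef
        have hε : 0 < ε := by positivity
        have h1 : |Real.log x| ^ m ≤ (x ^ (-ε) / ε) ^ m :=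
          pow_le_pow_left₀ (abs_nonneg _) (abs_log_le_small hx0 hx1 hε) m
        have h2 : (x ^ (-ε) / ε) ^ m = (1/ε)^m * x ^ (-ε*m) := by
          rw [div_pow, ← Real.rpow_natCast (x ^ (-ε)) m, ← Real.rpow_mul hx]
          ring_nf
        have h3 : -ε*m = -(a/2) := by
          field_simp [hεdef]
          rw [hεdef]; field_simp
        have h4 : (1/ε)^m = (2*m/a)^m := by
          rw [hεdef]; congr 1; field_simp
        calc |Real.log x| ^ m ≤ (x ^ (-ε) / ε) ^ m := h1
          _ = (2*m/a)^m * x ^ (-(a/2)) := by rw [h2, h3, h4]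
    have h5 : x ^ t * |Real.log x| ^ m ≤ (2*m/a)^m * x ^ (t - a/2) := by
      calc x ^ t * |Real.log x| ^ m ≤ x ^ t * ((2*m/a)^m * x ^ (-(a/2))) := by
            exact mul_le_mul_of_nonneg_left key (Real.rpow_nonneg hx t)
        _ = (2*m/a)^m * (x ^ t * x ^ (-(a/2))) := by ring
        _ = (2*m/a)^m * x ^ (t - a/2) := by rw [← Real.rpow_add hx0]; ring_nf
    have h6 : x ^ (t - a/2) ≤ x ^ (a/2) :=
      Real.rpow_le_rpow_of_exponent_ge hx0 hx1 (by linarith)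
    have h7 : (0:ℝ) ≤ x ^ (2*b) := Real.rpow_nonneg hx _
    have h8 : (0:ℝ) ≤ x ^ (a/2) := Real.rpow_nonneg hx _
    nlinarith [mul_le_mul_of_nonneg_left h6 hC1]
  · -- 1 < x
    have key : |Real.log x| ^ m ≤ (m/b)^m * x ^ b := by
      rcases Nat.eq_zero_or_pos m with hm | hm
      · subst hm
        simp only [pow_zero, one_mul]
        calc (1:ℝ) = x ^ (0:ℝ) := (Real.rpow_zero x).symm
          _ ≤ x ^ b := Real.rpow_le_rpow_of_exponent_le hx1.le hb.le
      · have hm' : (0:ℝ) < m := by exact_mod_cast hm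
        set ε : ℝ := b/m with hεdef
        have hε : 0 < ε := by positivity
        have h1 : |Real.log x| ^ m ≤ (x ^ ε / ε) ^ m :=
          pow_le_pow_left₀ (abs_nonneg _) (abs_log_le_large hx1.le hε) m
        have h2 : (x ^ ε / ε) ^ m = (1/ε)^m * x ^ (ε*m) := by
          rw [div_pow, ← Real.rpow_natCast (x ^ ε) m, ← Real.rpow_mul hx]
          ring
        have h3 : ε*m = b := by rw [hεdef]; field_simp
        have h4 : (1/ε)^m = (m/b)^m := by
          rw [hεdef]; congr 1; field_simp
        calc |Real.log x| ^ m ≤ (x ^ ε / ε) ^ m := h1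
          _ = (m/b)^m * x ^ b := by rw [h2, h3, h4]
    have h5 : x ^ t * |Real.log x| ^ m ≤ (m/b)^m * x ^ (2*b) := by
      calc x ^ t * |Real.log x| ^ m ≤ x ^ b * ((m/b)^m * x ^ b) := by
            refine mul_le_mul (Real.rpow_le_rpow_of_exponent_le hx1.le htb) key (by positivity) (by positivity)
        _ = (m/b)^m * (x ^ b * x ^ b) := by ring
        _ = (m/b)^m * x ^ (2*b) := by rw [← Real.rpow_add (by linarith : (0:ℝ) < x)]; ring_nf
    have h8 : (0:ℝ) ≤ x ^ (a/2) := Real.rpow_nonneg hx _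
    nlinarith [Real.rpow_nonneg hx (2*b)]

end MgfAux2

section Main
variable {n : ℕ} {f : (Fin n → ℝ) → ℝ}

lemma meas_rpow (hf_meas : Measurable f) {c : ℝ} (hc : 0 ≤ c) :
    Measurable fun x => f x ^ c :=
  (Real.continuous_rpow_const hc).measurable.comp hf_meas

lemma integrable_rpow_log (hf_meas : Measurable f) (hf_nonneg : ∀ x, 0 ≤ f x)
    (hf_Lp : ∀ α : ℝ, 0 < α → Integrable (fun x => f x ^ α))
    (m : ℕ) {α : ℝ} (hα : 0 < α) :
    Integrable (fun x => f x ^ α * Real.log (f x) ^ m) := by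
  obtain ⟨C, hC, hbound⟩ := MgfAux2.dominating m hα le_rfl
  have hmeas : AEStronglyMeasurable (fun x => f x ^ α * Real.log (f x) ^ m)
      (volume : Measure (Fin n → ℝ)) :=
    (((meas_rpow hf_meas hα.le)).mul (hf_meas.log.pow_const m)).aestronglyMeasurable
  refine (((hf_Lp (α/2) (by linarith)).add (hf_Lp (2*α) (by linarith))).const_mul C).mono'
    hmeas ?_
  filter_upwards with x
  rw [Real.norm_eq_abs, abs_mul, abs_pow, abs_of_nonneg (Real.rpow_nonneg (hf_nonneg x) _)]
  exact hbound α ⟨le_rfl, le_rfl⟩ (f x) (hf_nonneg x)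

lemma hasDerivAt_integral_rpow_log (hf_meas : Measurable f) (hf_nonneg : ∀ x, 0 ≤ f x)
    (hf_Lp : ∀ α : ℝ, 0 < α → Integrable (fun x => f x ^ α))
    (m : ℕ) {α : ℝ} (hα : 0 < α) :
    HasDerivAt (fun t => ∫ x, f x ^ t * Real.log (f x) ^ m)
      (∫ x, f x ^ α * Real.log (f x) ^ (m+1)) α := by
  obtain ⟨C, hC, hbound⟩ := MgfAux2.dominating (m+1)
    (show (0:ℝ) < α/2 by linarith) (show α/2 ≤ 3*α/2 by linarith)
  have key := hasDerivAt_integral_of_dominated_loc_of_deriv_le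
    (F := fun (t : ℝ) (x : Fin n → ℝ) => f x ^ t * Real.log (f x) ^ m)
    (F' := fun (t : ℝ) (x : Fin n → ℝ) => f x ^ t * Real.log (f x) ^ (m+1))
    (bound := fun x => C * (f x ^ (α/2/2) + f x ^ (2*(3*α/2))))
    (μ := volume) (x₀ := α) (Metric.ball_mem_nhds α (show (0:ℝ) < α/2 by linarith))
    ?_ ?_ ?_ ?_ ?_ ?_
  · exact key.2
  · filter_upwards [isOpen_Ioi.mem_nhds hα] with t (ht : 0 < t)
    exact ((meas_rpow hf_meas ht.le).mul (hf_meas.log.pow_const m)).aestronglyMeasurable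
  · exact integrable_rpow_log hf_meas hf_nonneg hf_Lp m hα
  · exact ((meas_rpow hf_meas hα.le).mul (hf_meas.log.pow_const (m+1))).aestronglyMeasurable
  · filter_upwards with x t ht
    have ht' : t ∈ Set.Icc (α/2) (3*α/2) := by
      rw [Metric.mem_ball, Real.dist_eq, abs_sub_lt_iff] at ht
      constructor <;> linarith [ht.1, ht.2]
    rw [Real.norm_eq_abs, abs_mul, abs_pow, abs_of_nonneg (Real.rpow_nonneg (hf_nonneg x) _)]
    exact hbound t ht' (f x) (hf_nonneg x)
  · exact ((hf_Lp (α/2/2) (by linarith)).add (hf_Lp (2*(3*α/2)) (by linarith))).const_mul C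
  · filter_upwards with x t ht
    have ht0 : 0 < t := by
      rw [Metric.mem_ball, Real.dist_eq, abs_sub_lt_iff] at ht
      linarith [ht.2]
    rcases eq_or_lt_of_le (hf_nonneg x) with h0 | hpos
    · have hz : f x ^ t * Real.log (f x) ^ (m+1) = 0 := by
        rw [← h0, Real.zero_rpow ht0.ne', zero_mul]
      rw [hz]
      have hev : (fun s => f x ^ s * Real.log (f x) ^ m) =ᶠ[nhds t] fun _ => (0:ℝ) := by
        filter_upwards [IsOpen.mem_nhds isOpen_Ioi ht0] with s hs
        rw [← h0, Real.zero_rpow (ne_of_gt hs), zero_mul]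
      exact (hasDerivAt_const t (0:ℝ)).congr_of_eventuallyEq hev
    · have h := ((Real.hasStrictDerivAt_const_rpow hpos t).hasDerivAt).mul_const
        (Real.log (f x) ^ m)
      refine h.congr_deriv ?_
      ring


lemma M_pos (hf_nonneg : ∀ x, 0 ≤ f x) (hf_prob : ∫ x, f x = 1)
    (hf_Lp : ∀ α : ℝ, 0 < α → Integrable (fun x => f x ^ α)) {t : ℝ} (ht : 0 < t) :
    0 < ∫ x, f x ^ t := by
  rcases (integral_nonneg (f := fun x => f x ^ t) (fun x => Real.rpow_nonneg (hf_nonneg x) t)).lt_or_eq with h | h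
  · exact h
  exfalso
  have h0 : (fun x => f x ^ t) =ᵐ[(volume : Measure (Fin n → ℝ))] 0 :=
    (integral_eq_zero_iff_of_nonneg (fun x => Real.rpow_nonneg (hf_nonneg x) t)
      (hf_Lp t ht)).mp h.symm
  have h1 : f =ᵐ[(volume : Measure (Fin n → ℝ))] 0 := by
    filter_upwards [h0] with x hx
    simpa [Real.rpow_eq_zero (hf_nonneg x) ht.ne'] using hx
  have : ∫ x, f x = 0 := by
    rw [integral_congr_ae h1]; simp
  rw [hf_prob] at this; norm_num at this

lemma varentropy_tilt_eq (hf_meas : Measurable f) (hf_nonneg : ∀ x, 0 ≤ f x)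
    (hf_prob : ∫ x, f x = 1)
    (hf_Lp : ∀ α : ℝ, 0 < α → Integrable (fun x => f x ^ α)) {t : ℝ} (ht : 0 < t) :
    varentropy (tilt f t) =
      t^2 * ((∫ x, f x ^ t * Real.log (f x) ^ 2) * (∫ x, f x ^ t)
        - (∫ x, f x ^ t * Real.log (f x)) ^ 2) / (∫ x, f x ^ t) ^ 2 := by
  have hMpos := M_pos hf_nonneg hf_prob hf_Lp ht
  set M := ∫ x, f x ^ t with hM
  have hM0 : M ≠ 0 := hMpos.ne'
  have e1 : ∀ x, tilt f t x * Real.log (tilt f t x)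
      = (1/M) * (t * (f x ^ t * Real.log (f x)) - Real.log M * f x ^ t) := by
    intro x
    rcases eq_or_lt_of_le (hf_nonneg x) with h0 | hpos
    · simp [tilt, ← h0, Real.zero_rpow ht.ne', ← hM]
    · have hft : f x ^ t ≠ 0 := (Real.rpow_pos_of_pos hpos t).ne'
      rw [tilt, ← hM]
      rw [Real.log_div hft hM0, Real.log_rpow hpos]
      field_simp
  have e2 : ∀ x, tilt f t x * Real.log (tilt f t x) ^ 2
      = (1/M) * (t^2 * (f x ^ t * Real.log (f x) ^ 2)
          - 2*t*Real.log M * (f x ^ t * Real.log (f x)) + Real.log M ^ 2 * f x ^ t) := by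
    intro x
    rcases eq_or_lt_of_le (hf_nonneg x) with h0 | hpos
    · simp [tilt, ← h0, Real.zero_rpow ht.ne', ← hM]
    · have hft : f x ^ t ≠ 0 := (Real.rpow_pos_of_pos hpos t).ne'
      rw [tilt, ← hM]
      rw [Real.log_div hft hM0, Real.log_rpow hpos]
      field_simp
      ring
  have i0 : Integrable (fun x => f x ^ t) := hf_Lp t ht
  have i1 : Integrable (fun x => f x ^ t * Real.log (f x)) := by
    simpa using integrable_rpow_log hf_meas hf_nonneg hf_Lp 1 ht
  have i2 : Integrable (fun x => f x ^ t * Real.log (f x) ^ 2) :=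
    integrable_rpow_log hf_meas hf_nonneg hf_Lp 2 ht
  have A : ∫ x, tilt f t x * Real.log (tilt f t x)
      = (1/M) * (t * (∫ x, f x ^ t * Real.log (f x)) - Real.log M * M) := by
    simp only [e1]
    rw [integral_const_mul, integral_sub (i1.const_mul t) (i0.const_mul (Real.log M)),
      integral_const_mul, integral_const_mul, ← hM]
  have B : ∫ x, tilt f t x * Real.log (tilt f t x) ^ 2
      = (1/M) * (t^2 * (∫ x, f x ^ t * Real.log (f x) ^ 2)
          - 2*t*Real.log M * (∫ x, f x ^ t * Real.log (f x)) + Real.log M ^ 2 * M) := by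
    simp only [e2]
    have i12 : Integrable (fun x => t ^ 2 * (f x ^ t * Real.log (f x) ^ 2)
        - 2 * t * Real.log M * (f x ^ t * Real.log (f x))) :=
      (i2.const_mul _).sub (i1.const_mul _)
    rw [integral_const_mul, integral_add i12 (i0.const_mul _),
      integral_sub (i2.const_mul _) (i1.const_mul _),
      integral_const_mul, integral_const_mul, integral_const_mul, ← hM]
  simp only [varentropy]
  rw [A, B]
  field_simp
  ring

lemma key_ineq (hf_meas : Measurable f) (hf_nonneg : ∀ x, 0 ≤ f x)
    (hf_prob : ∫ x, f x = 1)
    (hf_Lp : ∀ α : ℝ, 0 < α → Integrable (fun x => f x ^ α))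
    (K : ℝ) (hKub : ∀ t : ℝ, 0 < t → varentropy (tilt f t) ≤ K)
    {α : ℝ} (hα : 0 < α) :
    Real.log (∫ x, f x ^ α) + (1 - α) * (∫ x, f x ^ (1:ℝ) * Real.log (f x))
      ≤ K * (α - 1 - Real.log α) := by
  set M : ℝ → ℝ := fun t => ∫ x, f x ^ t with hMdef
  set N : ℝ → ℝ := fun t => ∫ x, f x ^ t * Real.log (f x) with hNdef
  set P : ℝ → ℝ := fun t => ∫ x, f x ^ t * Real.log (f x) ^ 2 with hPdef
  have hMpos : ∀ t : ℝ, 0 < t → 0 < M t := fun t ht => M_pos hf_nonneg hf_prob hf_Lp ht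
  have hM : ∀ t : ℝ, 0 < t → HasDerivAt M (N t) t := by
    intro t ht
    have h := hasDerivAt_integral_rpow_log hf_meas hf_nonneg hf_Lp 0 ht
    simpa using h
  have hN : ∀ t : ℝ, 0 < t → HasDerivAt N (P t) t := by
    intro t ht
    have h := hasDerivAt_integral_rpow_log hf_meas hf_nonneg hf_Lp 1 ht
    simpa using h
  have hM1 : M 1 = 1 := by
    simp only [hMdef, Real.rpow_one]
    exact hf_prob
  set G : ℝ → ℝ := fun t => K * (t - 1 - Real.log t) - Real.log (M t) - (1 - t) * N 1
    with hGdef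
  set φ : ℝ → ℝ := fun t => K * (1 - 1/t) - N t / M t + N 1 with hφdef
  have hG : ∀ t : ℝ, 0 < t → HasDerivAt G (φ t) t := by
    intro t ht
    have h1 : HasDerivAt (fun t : ℝ => K * (t - 1 - Real.log t)) (K * (1 - 1/t)) t := by
      have := (((hasDerivAt_id t).sub_const 1).sub (Real.hasDerivAt_log ht.ne')).const_mul K
      simpa [one_div] using this
    have h2 : HasDerivAt (fun t => Real.log (M t)) (N t / M t) t :=
      (hM t ht).log (hMpos t ht).ne'
    have h3 : HasDerivAt (fun t : ℝ => (1 - t) * N 1) (-N 1) t := by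
      have := ((hasDerivAt_id t).const_sub 1).mul_const (N 1)
      simpa using this
    have := (h1.sub h2).sub h3
    refine this.congr_deriv ?_
    simp only [hφdef]
    ring
  have hφ : ∀ t : ℝ, 0 < t →
      HasDerivAt φ (K / t^2 - (P t * M t - N t^2) / (M t)^2) t := by
    intro t ht
    have h1 : HasDerivAt (fun t : ℝ => K * (1 - 1/t)) (K / t^2) t := by
      have := ((hasDerivAt_inv ht.ne').const_sub 1).const_mul K
      simpa [one_div, div_eq_mul_inv] using this
    have h2 : HasDerivAt (fun t => N t / M t)
        ((P t * M t - N t * N t) / (M t)^2) t :=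
      (hN t ht).div (hM t ht) (hMpos t ht).ne'
    have := (h1.sub h2).add_const (N 1)
    refine this.congr_deriv ?_
    ring
  have hφ' : ∀ t : ℝ, 0 < t → 0 ≤ K / t^2 - (P t * M t - N t^2) / (M t)^2 := by
    intro t ht
    have hv : t^2 * (P t * M t - N t^2) / (M t)^2 ≤ K := by
      have := hKub t ht
      rwa [varentropy_tilt_eq hf_meas hf_nonneg hf_prob hf_Lp ht] at this
    have ht2 : (0:ℝ) < t^2 := by positivity
    have hM2 : (0:ℝ) < (M t)^2 := pow_pos (hMpos t ht) 2
    rw [sub_nonneg]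
    have heq : (P t * M t - N t^2) / (M t)^2
        = (t^2 * (P t * M t - N t^2) / (M t)^2) / t^2 := by
      field_simp
    rw [heq]
    gcongr
  have hφcont : ContinuousOn φ (Set.Ioi 0) := fun t ht =>
    ((hφ t ht).continuousAt).continuousWithinAt
  have hφmono : MonotoneOn φ (Set.Ioi 0) := by
    apply monotoneOn_of_deriv_nonneg (convex_Ioi 0) hφcont
    · intro t ht
      rw [interior_Ioi] at ht
      exact (hφ t ht).differentiableAt.differentiableWithinAt
    · intro t ht
      rw [interior_Ioi] at ht
      rw [(hφ t ht).deriv]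
      exact hφ' t ht
  have hφ1 : φ 1 = 0 := by
    simp only [hφdef, hM1]
    ring
  have hGcont : ContinuousOn G (Set.Ioi 0) := fun t ht =>
    ((hG t ht).continuousAt).continuousWithinAt
  have hG1 : G 1 = 0 := by
    simp only [hGdef, hM1]
    simp
  have hGα : 0 ≤ G α := by
    rcases le_or_gt 1 α with h1α | h1α
    · have hmono : MonotoneOn G (Set.Ici 1) := by
        apply monotoneOn_of_deriv_nonneg (convex_Ici 1)
          (hGcont.mono (fun t ht => Set.mem_Ioi.mpr (lt_of_lt_of_le one_pos ht)))
        · intro t ht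
          rw [interior_Ici] at ht
          exact (hG t (lt_trans one_pos ht)).differentiableAt.differentiableWithinAt
        · intro t ht
          rw [interior_Ici] at ht
          rw [(hG t (lt_trans one_pos ht)).deriv]
          rw [← hφ1]
          exact hφmono (Set.mem_Ioi.mpr one_pos) (Set.mem_Ioi.mpr (lt_trans one_pos ht)) ht.le
      have := hmono (Set.mem_Ici.mpr le_rfl) (Set.mem_Ici.mpr h1α) h1α
      rwa [hG1] at this
    · have hanti : AntitoneOn G (Set.Icc α 1) := by
        apply antitoneOn_of_deriv_nonpos (convex_Icc α 1)
          (hGcont.mono (fun t ht => Set.mem_Ioi.mpr (lt_of_lt_of_le hα ht.1)))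
        · intro t ht
          rw [interior_Icc] at ht
          exact (hG t (lt_trans hα ht.1)).differentiableAt.differentiableWithinAt
        · intro t ht
          rw [interior_Icc] at ht
          rw [(hG t (lt_trans hα ht.1)).deriv]
          rw [← hφ1]
          exact hφmono (Set.mem_Ioi.mpr (lt_trans hα ht.1)) (Set.mem_Ioi.mpr one_pos) ht.2.le
      have := hanti (Set.mem_Icc.mpr ⟨le_rfl, h1α.le⟩) (Set.mem_Icc.mpr ⟨h1α.le, le_rfl⟩) h1α.le
      rwa [hG1] at this
  have : K * (α - 1 - Real.log α) - Real.log (M α) - (1 - α) * N 1 = G α := rfl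
  linarith [hGα]

lemma var_one_eq (hf_meas : Measurable f) (hf_nonneg : ∀ x, 0 ≤ f x)
    (hf_prob : ∫ x, f x = 1)
    (hf_Lp : ∀ α : ℝ, 0 < α → Integrable (fun x => f x ^ α)) :
    varentropy (tilt f 1)
      = ∫ x, f x ^ (1:ℝ) * (Real.log (f x) - ∫ y, f y ^ (1:ℝ) * Real.log (f y)) ^ 2 := by
  set N1 := ∫ y, f y ^ (1:ℝ) * Real.log (f y) with hN1
  have hM1 : (∫ x, f x ^ (1:ℝ)) = 1 := by
    simp only [Real.rpow_one]; exact hf_prob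
  have i0 : Integrable fun x : Fin n → ℝ => f x ^ (1:ℝ) := hf_Lp 1 one_pos
  have i1 : Integrable (fun x : Fin n → ℝ => f x ^ (1:ℝ) * Real.log (f x)) := by
    simpa using integrable_rpow_log hf_meas hf_nonneg hf_Lp 1 one_pos
  have i2 : Integrable (fun x : Fin n → ℝ => f x ^ (1:ℝ) * Real.log (f x) ^ 2) :=
    integrable_rpow_log hf_meas hf_nonneg hf_Lp 2 one_pos
  have expand : ∀ x, f x ^ (1:ℝ) * (Real.log (f x) - N1) ^ 2
      = f x ^ (1:ℝ) * Real.log (f x) ^ 2 - 2 * N1 * (f x ^ (1:ℝ) * Real.log (f x))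
        + N1 ^ 2 * f x ^ (1:ℝ) := by
    intro x; ring
  rw [varentropy_tilt_eq hf_meas hf_nonneg hf_prob hf_Lp one_pos]
  simp only [expand]
  have i12 : Integrable (fun x : Fin n → ℝ => f x ^ (1:ℝ) * Real.log (f x) ^ 2
      - 2 * N1 * (f x ^ (1:ℝ) * Real.log (f x))) := i2.sub (i1.const_mul _)
  rw [integral_add i12 (i0.const_mul _), integral_sub i2 (i1.const_mul _),
    integral_const_mul, integral_const_mul, hM1, ← hN1]
  ring

lemma integrable_Q (hf_meas : Measurable f) (hf_nonneg : ∀ x, 0 ≤ f x)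
    (hf_Lp : ∀ α : ℝ, 0 < α → Integrable (fun x => f x ^ α)) (c : ℝ) :
    Integrable (fun x : Fin n → ℝ => f x ^ (1:ℝ) * (Real.log (f x) - c) ^ 2) := by
  have i0 : Integrable fun x : Fin n → ℝ => f x ^ (1:ℝ) := hf_Lp 1 one_pos
  have i1 : Integrable (fun x : Fin n → ℝ => f x ^ (1:ℝ) * Real.log (f x)) := by
    simpa using integrable_rpow_log hf_meas hf_nonneg hf_Lp 1 one_pos
  have i2 : Integrable (fun x : Fin n → ℝ => f x ^ (1:ℝ) * Real.log (f x) ^ 2) :=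
    integrable_rpow_log hf_meas hf_nonneg hf_Lp 2 one_pos
  have : Integrable (fun x : Fin n → ℝ => f x ^ (1:ℝ) * Real.log (f x) ^ 2
      - 2 * c * (f x ^ (1:ℝ) * Real.log (f x)) + c ^ 2 * f x ^ (1:ℝ)) :=
    (i2.sub (i1.const_mul _)).add (i0.const_mul _)
  exact this.congr (Filter.Eventually.of_forall fun x => by ring)

end Main

/-- **Bootstrapping varentropy bounds to exponential deviation bounds**:
if `X` has density `f` on `ℝⁿ` with `f ∈ L^α(ℝⁿ)` for all `α > 0`, and
`K = sup_{α>0} V(X_α)` where `X_α` has the tilted density `f_α`, then for all `β ∈ ℝ`,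
`E[e^{β(h̃(X) - h(X))}] ≤ e^{K r(-β)}`, where `h̃(X) = -log f(X)` and `h(X) = E[h̃(X)]`. -/
theorem mgf_information_content_le {n : ℕ} (f : (Fin n → ℝ) → ℝ)
    (hf_meas : Measurable f) (hf_nonneg : ∀ x, 0 ≤ f x)
    (hf_prob : ∫ x, f x = 1)
    (hf_Lp : ∀ α : ℝ, 0 < α → Integrable (fun x => f x ^ α))
    (K : ℝ) (hK : IsLUB ((fun α => varentropy (tilt f α)) '' Set.Ioi 0) K) :
    ∀ β : ℝ,
      (∫⁻ x, ENNReal.ofReal (f x * Real.exp (β * (-Real.log (f x) - entropy f))))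
        ≤ EReal.exp ((K : EReal) * rate (-β)) := by
  intro β
  have hKub : ∀ t : ℝ, 0 < t → varentropy (tilt f t) ≤ K := fun t ht =>
    hK.1 ⟨t, ht, rfl⟩
  set N1 := ∫ x, f x ^ (1:ℝ) * Real.log (f x) with hN1def
  have hent : entropy f = -N1 := by
    simp only [entropy, hN1def, Real.rpow_one]
  rcases lt_or_ge β 1 with hβ | hβ
  · -- case β < 1
    have hα : 0 < 1 - β := by linarith
    have hrate : rate (-β) = ((-β - Real.log (1 - β) : ℝ) : EReal) := by
      rw [rate, if_pos (by linarith : (-1:ℝ) < -β)]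
      norm_num [sub_eq_add_neg]
    have hpt : ∀ x, f x * Real.exp (β * (-Real.log (f x) - entropy f))
        = Real.exp (β * N1) * f x ^ (1 - β) := by
      intro x
      rcases eq_or_lt_of_le (hf_nonneg x) with h0 | hpos
      · rw [← h0, Real.zero_rpow hα.ne']
        simp
      · have harg : β * (-Real.log (f x) - entropy f)
            = Real.log (f x) * (-β) + β * N1 := by
          rw [hent]; ring
        rw [harg, Real.exp_add, ← Real.rpow_def_of_pos hpos]
        have h2 : f x * f x ^ (-β) = f x ^ (1 - β) := by
          nth_rewrite 1 [← Real.rpow_one (f x)]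
          rw [← Real.rpow_add hpos]
          congr 1
        calc f x * (f x ^ (-β) * Real.exp (β * N1))
            = Real.exp (β * N1) * (f x * f x ^ (-β)) := by ring
          _ = Real.exp (β * N1) * f x ^ (1 - β) := by rw [h2]
    have hint : Integrable (fun x => f x * Real.exp (β * (-Real.log (f x) - entropy f))) := by
      simp only [hpt]
      exact (hf_Lp (1-β) hα).const_mul _
    have hnn : 0 ≤ᵐ[(volume : Measure (Fin n → ℝ))]
        fun x => f x * Real.exp (β * (-Real.log (f x) - entropy f)) :=
      Filter.Eventually.of_forall fun x => mul_nonneg (hf_nonneg x) (Real.exp_nonneg _)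
    rw [← ofReal_integral_eq_lintegral_ofReal hint hnn, hrate, ← EReal.coe_mul,
      EReal.exp_coe]
    apply ENNReal.ofReal_le_ofReal
    have hI : ∫ x, f x * Real.exp (β * (-Real.log (f x) - entropy f))
        = Real.exp (β * N1) * ∫ x, f x ^ (1 - β) := by
      simp only [hpt]
      rw [integral_const_mul]
    rw [hI]
    have hIpos : 0 < ∫ x, f x ^ (1-β) := M_pos hf_nonneg hf_prob hf_Lp hα
    have key := key_ineq hf_meas hf_nonneg hf_prob hf_Lp K hKub hα
    rw [show K * ((1 - β) - 1 - Real.log (1 - β)) = K * (-β - Real.log (1 - β)) by ring]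
      at key
    rw [← Real.exp_log hIpos, ← Real.exp_add]
    apply Real.exp_le_exp.mpr
    rw [show (1:ℝ) - (1 - β) = β by ring] at key
    linarith
  · -- case 1 ≤ β
    have hvar1 := var_one_eq hf_meas hf_nonneg hf_prob hf_Lp
    have hQ0 : 0 ≤ ∫ x, f x ^ (1:ℝ) * (Real.log (f x) - N1) ^ 2 :=
      integral_nonneg fun x => mul_nonneg (Real.rpow_nonneg (hf_nonneg x) _) (sq_nonneg _)
    have hK0 : 0 ≤ K := le_trans (hvar1 ▸ hQ0) (hKub 1 one_pos)
    have hrate : rate (-β) = ⊤ := by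
      rw [rate, if_neg]
      push_neg
      linarith
    rcases eq_or_lt_of_le hK0 with hKz | hKpos
    · -- K = 0
      have hQz : (∫ x, f x ^ (1:ℝ) * (Real.log (f x) - N1) ^ 2) = 0 := by
        have h1 : varentropy (tilt f 1) ≤ 0 := by rw [hKz]; exact hKub 1 one_pos
        rw [hvar1] at h1
        exact le_antisymm h1 hQ0
      have hae := (integral_eq_zero_iff_of_nonneg
        (fun x => mul_nonneg (Real.rpow_nonneg (hf_nonneg x) _) (sq_nonneg _))
        (integrable_Q hf_meas hf_nonneg hf_Lp N1)).mp hQz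
      have haept : ∀ᵐ x ∂(volume : Measure (Fin n → ℝ)),
          ENNReal.ofReal (f x * Real.exp (β * (-Real.log (f x) - entropy f)))
            = ENNReal.ofReal (f x) := by
        filter_upwards [hae] with x hx
        have hx' : f x ^ (1:ℝ) * (Real.log (f x) - N1) ^ 2 = 0 := hx
        rcases mul_eq_zero.mp hx' with h | h
        · rw [Real.rpow_one] at h
          rw [h]
          simp
        · have hlog : Real.log (f x) = N1 := by
            have := pow_eq_zero_iff (n := 2) (by norm_num) |>.mp h
            linarith [sub_eq_zero.mp this]
          rw [hlog, hent]
          norm_num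
      rw [lintegral_congr_ae haept]
      have hfint : Integrable f := by
        simpa [Real.rpow_one] using hf_Lp 1 one_pos
      rw [← ofReal_integral_eq_lintegral_ofReal hfint
        (Filter.Eventually.of_forall hf_nonneg), hf_prob]
      rw [hrate, ← hKz]
      simp
    · rw [hrate, EReal.coe_mul_top_of_pos hKpos]
      simp
end
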